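/- If f = Σ_{k∈ℤ} α_k a_k where the a_k are L^p atoms with disjoint supports of measure 2^k (so ess sup|a_k| = 2^{-k/p}), only finitely many α_k are nonzero, and 1 ≤ p, q < ∞, then ‖f‖_{L^{p,q}} ≤ C(p,q) (Σ_k |α_k|^q)^{1/q} with constant independent of the number of terms. -/

import Mathlib

open MeasureTheory Filter Topology
open scoped ENNReal NNReal

noncomputable section

variable {X : Type*} [MeasurableSpace X]

/-- Decreasing rearrangement of `f`. -/
def rearr (μ : Measure X) (f : X → ℂ) (t : ℝ≥0∞) : ℝ≥0∞ :=
  sInf {σ : ℝ≥0∞ | μ {x | σ < (‖f x‖₊ : ℝ≥0∞)} ≤ t}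

/-- The Lorentz `L^{p,q}` norm. -/
def lorentzNorm (p q : ℝ) (μ : Measure X) (f : X → ℂ) : ℝ≥0∞ :=
  (∫⁻ t in Set.Ioi (0:ℝ),
      (ENNReal.ofReal t ^ (1/p) * rearr μ f (ENNReal.ofReal t)) ^ q / ENNReal.ofReal t) ^ (1/q)

lemma aux_geom (r : ℝ) (k : ℤ) :
    (∑' k₀ : ℤ, if k₀ ≤ k then (2:ℝ≥0∞) ^ (r * (k₀:ℝ)) else 0)
      = 2 ^ (r * (k:ℝ)) * (1 - 2 ^ (-r))⁻¹ := by
  have hinj : Function.Injective (fun n : ℕ => k - n) := by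
    intro m n h; simp only [sub_right_inj, Nat.cast_inj] at h; exact h
  have hsupp : Function.support (fun k₀ : ℤ => if k₀ ≤ k then (2:ℝ≥0∞) ^ (r * (k₀:ℝ)) else 0)
      ⊆ Set.range (fun n : ℕ => k - n) := by
    intro k₀ hk₀
    have hle : k₀ ≤ k := by by_contra h; simp [h] at hk₀
    exact ⟨(k - k₀).toNat, by simp; omega⟩
  rw [← hinj.tsum_eq hsupp]
  have hterm : ∀ n : ℕ, (if (k - n : ℤ) ≤ k then (2:ℝ≥0∞) ^ (r * ((k - n : ℤ):ℝ)) else 0)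
      = 2 ^ (r * (k:ℝ)) * ((2:ℝ≥0∞) ^ (-r)) ^ n := by
    intro n
    rw [if_pos (by omega)]
    push_cast
    rw [mul_sub, ENNReal.rpow_sub _ _ (by norm_num) (by norm_num)]
    rw [div_eq_mul_inv, ← ENNReal.rpow_neg, ← ENNReal.rpow_natCast ((2:ℝ≥0∞)^(-r)),
      ← ENNReal.rpow_mul]
    ring_nf
  rw [tsum_congr hterm, ENNReal.tsum_mul_left, ENNReal.tsum_geometric]

lemma aux_geom2 (k₀ : ℤ) :
    (∑' k : ℤ, if k < k₀ then (2:ℝ≥0∞) ^ ((k:ℝ)) else 0) = 2 ^ ((k₀:ℝ)) := by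
  have h := aux_geom 1 (k₀ - 1)
  simp only [one_mul] at h
  have he : ∀ k : ℤ, (if k ≤ k₀ - 1 then (2:ℝ≥0∞) ^ ((k:ℝ)) else 0)
      = (if k < k₀ then (2:ℝ≥0∞) ^ ((k:ℝ)) else 0) := by
    intro k; congr 1; simp only [eq_iff_iff]; omega
  rw [tsum_congr he] at h
  rw [h]
  have : ((k₀ - 1 : ℤ):ℝ) = (k₀:ℝ) - 1 := by push_cast; ring
  rw [this, ENNReal.rpow_sub _ _ (by norm_num) (by norm_num)]
  have h1 : (1 - (2:ℝ≥0∞) ^ (-(1:ℝ)))⁻¹ = 2 := by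
    rw [ENNReal.rpow_neg, ENNReal.rpow_one, ENNReal.one_sub_inv_two]
    simp
  rw [h1, ENNReal.rpow_one, ENNReal.div_mul_cancel (by norm_num) (by norm_num)]


/-- if `f = Σ_k α_k a_k` with `a_k` `L^p` atoms with disjoint
supports of measure `2^k` (so `|a_k| ≤ 2^{-k/p}`) and only finitely many
`α_k ≠ 0`, then `‖f‖_{L^{p,q}} ≤ C(p,q) (Σ_k |α_k|^q)^{1/q}`, with constant
independent of the number of terms. -/
theorem lorentz_norm_of_atomic_sum {X : Type*} [MeasurableSpace X]
    (p q : ℝ) (hp : 1 ≤ p) (hq : 1 ≤ q) :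
    ∃ C : ℝ≥0∞, C ≠ ⊤ ∧
      ∀ (μ : Measure X) (α : ℤ → ℂ) (a : ℤ → X → ℂ),
        (Function.support α).Finite →
        (∀ k, Measurable (a k)) →
        (∀ k, α k ≠ 0 → μ (Function.support (a k)) = (2:ℝ≥0∞) ^ k) →
        (∀ k, α k ≠ 0 → ∀ᵐ x ∂μ, ‖a k x‖ ≤ (2:ℝ) ^ (-(k:ℝ) / p)) →
        (Pairwise fun k l => Disjoint (Function.support (a k)) (Function.support (a l))) →
        lorentzNorm p q μ (fun x => ∑' k : ℤ, α k * a k x) ≤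
          C * (∑' k : ℤ, (‖α k‖₊ : ℝ≥0∞) ^ q) ^ (1/q) := by
  have hp0 : (0:ℝ) < p := lt_of_lt_of_le one_pos hp
  have hq0 : (0:ℝ) < q := lt_of_lt_of_le one_pos hq
  set C₀ : ℝ≥0∞ := (1 - (2:ℝ≥0∞) ^ (-(q/p)))⁻¹ with hC₀
  set K : ℝ≥0∞ := 2 * 2 ^ (q/p) * C₀ with hK
  have hC₀top : C₀ ≠ ⊤ := by
    rw [hC₀, ENNReal.inv_ne_top]
    have h2 : (2:ℝ≥0∞) ^ (-(q/p)) < 1 :=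
      ENNReal.rpow_lt_one_of_one_lt_of_neg (by norm_num) (neg_lt_zero.2 (div_pos hq0 hp0))
    exact (tsub_pos_of_lt h2).ne'
  have hKtop : K ≠ ⊤ := by
    rw [hK]
    exact ENNReal.mul_ne_top (ENNReal.mul_ne_top (by norm_num)
      (ENNReal.rpow_ne_top_of_nonneg (by positivity) (by norm_num))) hC₀top
  refine ⟨K ^ (1/q), ENNReal.rpow_ne_top_of_nonneg (by positivity) hKtop, ?_⟩
  intro μ α a hfin hmeas hsize hbound hdisj
  set f : X → ℂ := fun x => ∑' k : ℤ, α k * a k x with hf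
  set c : ℤ → ℝ≥0∞ := fun k => (‖α k‖₊ : ℝ≥0∞) * 2 ^ (-(k:ℝ)/p) with hc
  set S : ℤ → ℝ≥0∞ := fun k₀ => ⨆ (k : ℤ) (_ : k₀ ≤ k), c k with hS
  set A : ℝ≥0∞ := ∑' k : ℤ, (‖α k‖₊ : ℝ≥0∞) ^ q with hA
  have h2ne0 : ∀ y : ℝ, (2:ℝ≥0∞) ^ y ≠ 0 :=
    fun y => (ENNReal.rpow_pos (by norm_num) (by norm_num)).ne'
  have h2netop : ∀ y : ℝ, (2:ℝ≥0∞) ^ y ≠ ⊤ := by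
    intro y
    rcases le_or_gt 0 y with h | h
    · exact ENNReal.rpow_ne_top_of_nonneg h (by norm_num)
    · have : (2:ℝ≥0∞) ^ y ≤ 2 ^ (0:ℝ) :=
        ENNReal.rpow_le_rpow_of_exponent_le (by norm_num) h.le
      rw [ENNReal.rpow_zero] at this
      exact (lt_of_le_of_lt this (by norm_num)).ne
  have hofReal : ∀ s : ℝ, ENNReal.ofReal ((2:ℝ) ^ s) = (2:ℝ≥0∞) ^ s := by
    intro s
    rw [← ENNReal.ofReal_rpow_of_pos two_pos]
    norm_num
  have hG : ∀ᵐ x ∂μ, ∀ k, α k ≠ 0 → ‖a k x‖ ≤ (2:ℝ) ^ (-(k:ℝ)/p) := by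
    rw [ae_all_iff]
    intro k
    by_cases h : α k = 0
    · exact Filter.Eventually.of_forall fun x hk => absurd h hk
    · exact (hbound k h).mono fun x hx _ => hx
  have hPoint : ∀ x, (∀ k, α k ≠ 0 → ‖a k x‖ ≤ (2:ℝ) ^ (-(k:ℝ)/p)) →
      f x = 0 ∨ ∃ k, α k ≠ 0 ∧ a k x ≠ 0 ∧ (‖f x‖₊ : ℝ≥0∞) ≤ c k := by
    intro x hx
    by_cases hex : ∃ k, α k ≠ 0 ∧ a k x ≠ 0
    · obtain ⟨k, hk, hak⟩ := hex
      right
      have hsingle : ∀ l, l ≠ k → α l * a l x = 0 := by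
        intro l hl
        have hal : a l x = 0 := by
          by_contra h
          exact (Set.disjoint_left.1 (hdisj hl)) h hak
        rw [hal, mul_zero]
      have hfx : f x = α k * a k x := tsum_eq_single k hsingle
      refine ⟨k, hk, hak, ?_⟩
      rw [hfx]
      calc (‖α k * a k x‖₊ : ℝ≥0∞) = (‖α k‖₊ : ℝ≥0∞) * (‖a k x‖₊ : ℝ≥0∞) := by
            rw [nnnorm_mul]; push_cast; ring
        _ ≤ (‖α k‖₊ : ℝ≥0∞) * 2 ^ (-(k:ℝ)/p) := by
            gcongr
            rw [← enorm_eq_nnnorm, ← ofReal_norm, ← hofReal]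
            exact ENNReal.ofReal_le_ofReal (hx k hk)
    · left
      have hz : ∀ l : ℤ, α l * a l x = 0 := by
        intro l
        by_cases h : α l = 0
        · rw [h, zero_mul]
        · have : a l x = 0 := by
            by_contra h2; exact hex ⟨l, h, h2⟩
          rw [this, mul_zero]
      show (∑' k : ℤ, α k * a k x) = 0
      rw [tsum_congr hz, tsum_zero]
  have hDist : ∀ k₀ : ℤ, μ {x | S k₀ < (‖f x‖₊ : ℝ≥0∞)} ≤ 2 ^ ((k₀:ℝ)) := by
    intro k₀
    set U : Set X := ⋃ k : ℤ, (if k < k₀ ∧ α k ≠ 0 then Function.support (a k) else ∅) with hU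
    have hsub : {x | S k₀ < (‖f x‖₊ : ℝ≥0∞)} ≤ᵐ[μ] U := by
      filter_upwards [hG] with x hx
      intro hmem
      have hmem' : S k₀ < (‖f x‖₊ : ℝ≥0∞) := hmem
      rcases hPoint x hx with h0 | ⟨k, hk, hak, hle⟩
      · rw [h0] at hmem'; simp at hmem'
      · have hklt : k < k₀ := by
          by_contra h
          push_neg at h
          have hcS : c k ≤ S k₀ := le_iSup₂ (f := fun (k : ℤ) (_ : k₀ ≤ k) => c k) k h
          exact absurd hmem' (not_lt.2 (hle.trans hcS))
        exact Set.mem_iUnion.2 ⟨k, by rw [if_pos ⟨hklt, hk⟩]; exact hak⟩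
    calc μ {x | S k₀ < (‖f x‖₊:ℝ≥0∞)} ≤ μ U := measure_mono_ae hsub
      _ ≤ ∑' k : ℤ, μ (if k < k₀ ∧ α k ≠ 0 then Function.support (a k) else ∅) :=
          measure_iUnion_le _
      _ ≤ ∑' k : ℤ, (if k < k₀ then (2:ℝ≥0∞) ^ ((k:ℝ)) else 0) := by
          apply ENNReal.tsum_le_tsum
          intro k
          by_cases h : k < k₀ ∧ α k ≠ 0
          · rw [if_pos h, if_pos h.1, hsize k h.2, ← ENNReal.rpow_intCast]
          · rw [if_neg h]
            simp only [measure_empty]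
            exact zero_le
      _ = 2 ^ ((k₀:ℝ)) := aux_geom2 k₀
  have hRearr : ∀ (k₀ : ℤ) (t : ℝ≥0∞), (2:ℝ≥0∞) ^ ((k₀:ℝ)) ≤ t → rearr μ f t ≤ S k₀ :=
    fun k₀ t ht => sInf_le (le_trans (hDist k₀) ht)
  have hSq : ∀ k₀ : ℤ, (S k₀) ^ q ≤ ∑' k : ℤ, (if k₀ ≤ k then (c k) ^ q else 0) := by
    intro k₀
    have h1 : S k₀ ≤ (∑' k : ℤ, (if k₀ ≤ k then (c k) ^ q else 0)) ^ (1/q) := by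
      apply iSup₂_le
      intro k hk
      have h2 : (c k) ^ q ≤ ∑' k : ℤ, (if k₀ ≤ k then (c k) ^ q else 0) := by
        have h3 := ENNReal.le_tsum (f := fun k : ℤ => (if k₀ ≤ k then (c k) ^ q else 0)) k
        rwa [if_pos hk] at h3
      calc c k = ((c k) ^ q) ^ (1/q) := by
            rw [← ENNReal.rpow_mul, mul_one_div, div_self hq0.ne', ENNReal.rpow_one]
        _ ≤ _ := ENNReal.rpow_le_rpow h2 (by positivity)
    calc (S k₀) ^ q ≤ ((∑' k : ℤ, (if k₀ ≤ k then (c k) ^ q else 0)) ^ (1/q)) ^ q :=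
          ENNReal.rpow_le_rpow h1 hq0.le
      _ = _ := by
          rw [← ENNReal.rpow_mul, one_div, inv_mul_cancel₀ hq0.ne', ENNReal.rpow_one]
  -- the integrand
  set F : ℝ → ℝ≥0∞ := fun t =>
    (ENNReal.ofReal t ^ (1/p) * rearr μ f (ENNReal.ofReal t)) ^ q / ENNReal.ofReal t with hF
  have hcover : Set.Ioi (0:ℝ) ⊆ ⋃ k₀ : ℤ, Set.Ico ((2:ℝ) ^ ((k₀:ℝ))) ((2:ℝ) ^ ((k₀:ℝ)+1)) := by
    intro t ht
    obtain ⟨n, hn⟩ := exists_mem_Ico_zpow (K := ℝ) (show (0:ℝ) < t from ht) one_lt_two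
    refine Set.mem_iUnion.2 ⟨n, ?_⟩
    have e1 : (2:ℝ) ^ ((n:ℝ)) = 2 ^ (n : ℤ) := Real.rpow_intCast 2 n
    have e2 : (2:ℝ) ^ ((n:ℝ)+1) = 2 ^ (n+1 : ℤ) := by
      rw [← Real.rpow_intCast 2 (n+1)]; push_cast; ring_nf
    rw [Set.mem_Ico, e1, e2]
    exact hn
  have hpiece : ∀ k₀ : ℤ, (∫⁻ t in Set.Ico ((2:ℝ)^((k₀:ℝ))) ((2:ℝ)^((k₀:ℝ)+1)), F t)
      ≤ 2 * (2:ℝ≥0∞) ^ (((k₀:ℝ)+1) * (q/p)) * S k₀ ^ q := by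
    intro k₀
    set B : ℝ≥0∞ := ((2:ℝ≥0∞) ^ (((k₀:ℝ)+1)/p) * S k₀) ^ q / 2 ^ ((k₀:ℝ)) with hB
    have hFb : ∀ t ∈ Set.Ico ((2:ℝ)^((k₀:ℝ))) ((2:ℝ)^((k₀:ℝ)+1)), F t ≤ B := by
      intro t ht
      obtain ⟨ht1, ht2⟩ := ht
      have hlow : (2:ℝ≥0∞) ^ ((k₀:ℝ)) ≤ ENNReal.ofReal t := by
        rw [← hofReal]; exact ENNReal.ofReal_le_ofReal ht1
      have hhigh : ENNReal.ofReal t ≤ (2:ℝ≥0∞) ^ ((k₀:ℝ)+1) := by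
        rw [← hofReal]; exact ENNReal.ofReal_le_ofReal ht2.le
      have h1 : ENNReal.ofReal t ^ (1/p) ≤ (2:ℝ≥0∞) ^ (((k₀:ℝ)+1)/p) := by
        calc ENNReal.ofReal t ^ (1/p) ≤ ((2:ℝ≥0∞) ^ ((k₀:ℝ)+1)) ^ (1/p) :=
              ENNReal.rpow_le_rpow hhigh (by positivity)
          _ = (2:ℝ≥0∞) ^ (((k₀:ℝ)+1)/p) := by
              rw [← ENNReal.rpow_mul, mul_one_div]
      have h2 : rearr μ f (ENNReal.ofReal t) ≤ S k₀ := hRearr k₀ _ hlow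
      exact ENNReal.div_le_div
        (ENNReal.rpow_le_rpow (mul_le_mul' h1 h2) hq0.le) hlow
    calc (∫⁻ t in Set.Ico ((2:ℝ)^((k₀:ℝ))) ((2:ℝ)^((k₀:ℝ)+1)), F t)
        ≤ ∫⁻ _ in Set.Ico ((2:ℝ)^((k₀:ℝ))) ((2:ℝ)^((k₀:ℝ)+1)), B :=
          setLIntegral_mono measurable_const hFb
      _ = B * volume (Set.Ico ((2:ℝ)^((k₀:ℝ))) ((2:ℝ)^((k₀:ℝ)+1))) := setLIntegral_const _ _
      _ ≤ B * (2:ℝ≥0∞) ^ ((k₀:ℝ)+1) := by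
          gcongr
          rw [Real.volume_Ico, ← hofReal]
          exact ENNReal.ofReal_le_ofReal (by nlinarith [Real.rpow_pos_of_pos (two_pos) ((k₀:ℝ))])
      _ = 2 * (2:ℝ≥0∞) ^ (((k₀:ℝ)+1) * (q/p)) * S k₀ ^ q := by
          rw [hB, ENNReal.rpow_add _ _ (by norm_num) (by norm_num), ENNReal.rpow_one,
            ← mul_assoc, ENNReal.div_mul_cancel (h2ne0 _) (h2netop _),
            ENNReal.mul_rpow_of_nonneg _ _ hq0.le, ← ENNReal.rpow_mul]
          ring_nf
  have hIint : (∫⁻ t in Set.Ioi (0:ℝ), F t) ≤ K * A := by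
    calc (∫⁻ t in Set.Ioi (0:ℝ), F t)
        ≤ ∫⁻ t in ⋃ k₀ : ℤ, Set.Ico ((2:ℝ) ^ ((k₀:ℝ))) ((2:ℝ) ^ ((k₀:ℝ)+1)), F t :=
          lintegral_mono_set hcover
      _ ≤ ∑' k₀ : ℤ, ∫⁻ t in Set.Ico ((2:ℝ) ^ ((k₀:ℝ))) ((2:ℝ) ^ ((k₀:ℝ)+1)), F t :=
          lintegral_iUnion_le _ _
      _ ≤ ∑' k₀ : ℤ, 2 * (2:ℝ≥0∞) ^ (((k₀:ℝ)+1) * (q/p)) * S k₀ ^ q :=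
          ENNReal.tsum_le_tsum hpiece
      _ ≤ ∑' k₀ : ℤ, ∑' k : ℤ,
            (if k₀ ≤ k then 2 * (2:ℝ≥0∞) ^ (((k₀:ℝ)+1) * (q/p)) * (c k) ^ q else 0) := by
          apply ENNReal.tsum_le_tsum
          intro k₀
          have he : ∀ k : ℤ, (if k₀ ≤ k then 2 * (2:ℝ≥0∞) ^ (((k₀:ℝ)+1) * (q/p)) * (c k) ^ q else 0)
              = 2 * (2:ℝ≥0∞) ^ (((k₀:ℝ)+1) * (q/p)) * (if k₀ ≤ k then (c k) ^ q else 0) := by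
            intro k; by_cases h : k₀ ≤ k <;> simp [h]
          rw [tsum_congr he, ENNReal.tsum_mul_left]
          exact mul_le_mul_right (hSq k₀) _
      _ = ∑' k : ℤ, ∑' k₀ : ℤ,
            (if k₀ ≤ k then 2 * (2:ℝ≥0∞) ^ (((k₀:ℝ)+1) * (q/p)) * (c k) ^ q else 0) :=
          ENNReal.tsum_comm
      _ ≤ ∑' k : ℤ, K * (‖α k‖₊ : ℝ≥0∞) ^ q := by
          apply ENNReal.tsum_le_tsum
          intro k
          have he : ∀ k₀ : ℤ, (if k₀ ≤ k then 2 * (2:ℝ≥0∞) ^ (((k₀:ℝ)+1) * (q/p)) * (c k) ^ q else 0)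
              = (2 * (2:ℝ≥0∞) ^ (q/p) * (c k) ^ q) * (if k₀ ≤ k then (2:ℝ≥0∞) ^ ((q/p) * (k₀:ℝ)) else 0) := by
            intro k₀
            by_cases h : k₀ ≤ k
            · rw [if_pos h, if_pos h,
                show ((k₀:ℝ)+1) * (q/p) = (q/p) + (q/p) * (k₀:ℝ) by ring,
                ENNReal.rpow_add _ _ (by norm_num) (by norm_num)]
              ring
            · rw [if_neg h, if_neg h, mul_zero]
          rw [tsum_congr he, ENNReal.tsum_mul_left, aux_geom (q/p) k]
          apply le_of_eq
          have hck : (c k) ^ q * (2:ℝ≥0∞) ^ ((q/p) * (k:ℝ)) = (‖α k‖₊ : ℝ≥0∞) ^ q := by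
            rw [hc, ENNReal.mul_rpow_of_nonneg _ _ hq0.le, ← ENNReal.rpow_mul,
              mul_assoc, ← ENNReal.rpow_add _ _ (by norm_num) (by norm_num),
              show (-(k:ℝ)/p) * q + (q/p) * (k:ℝ) = 0 by ring, ENNReal.rpow_zero, mul_one]
          calc (2 * (2:ℝ≥0∞) ^ (q/p) * (c k) ^ q) * ((2:ℝ≥0∞) ^ ((q/p) * (k:ℝ)) * (1 - 2 ^ (-(q/p)))⁻¹)
              = (2 * (2:ℝ≥0∞) ^ (q/p) * C₀) * ((c k) ^ q * (2:ℝ≥0∞) ^ ((q/p) * (k:ℝ))) := by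
                rw [hC₀]; ring
            _ = K * (‖α k‖₊ : ℝ≥0∞) ^ q := by rw [hck, hK]
      _ = K * A := by rw [ENNReal.tsum_mul_left, hA]
  have hfinal : lorentzNorm p q μ f ≤ (K * A) ^ (1/q) := by
    rw [lorentzNorm]
    exact ENNReal.rpow_le_rpow hIint (by positivity)
  calc lorentzNorm p q μ f ≤ (K * A) ^ (1/q) := hfinal
    _ = K ^ (1/q) * A ^ (1/q) := ENNReal.mul_rpow_of_nonneg _ _ (by positivity)
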